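/- arXiv:2307.11773 — 2 statements merged into one kernel-verified Lean document; each statement's English description precedes it below -/
import Mathlib

section
/- Let t be a real number with t > 0 and 1 + t − t² > 0, and set x := (1/t − √(1 + t − t²)/√t)/2 and y := (1/t + √(1 + t − t²)/√t)/2. Then 1 − x − x² + x³ − y − 2xy − x²y − y² − xy² + y³ = 0; that is, this parameterization satisfies the polynomial form of the degree-(1,15) modular equation. -/
/-- The parameterization `x = (1/t − √(1+t−t²)/√t)/2`, `y = (1/t + √(1+t−t²)/√t)/2`
satisfies the polynomial form of the degree-(1,15) modular equation. -/
theorem parameterization_degree_1_15 (t : ℝ) (ht : 0 < t) (ht' : 0 < 1 + t - t ^ 2)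
    (x y : ℝ)
    (hx : x = (1 / t - Real.sqrt (1 + t - t ^ 2) / Real.sqrt t) / 2)
    (hy : y = (1 / t + Real.sqrt (1 + t - t ^ 2) / Real.sqrt t) / 2) :
    1 - x - x ^ 2 + x ^ 3 - y - 2 * x * y - x ^ 2 * y - y ^ 2 - x * y ^ 2 + y ^ 3 = 0 := by
  have hb : (0:ℝ) < Real.sqrt t := Real.sqrt_pos.mpr ht
  have hb2 : Real.sqrt t ^ 2 = t := Real.sq_sqrt ht.le
  have ha2 : Real.sqrt (1 + t - t ^ 2) ^ 2 = 1 + t - t ^ 2 := Real.sq_sqrt ht'.le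
  subst hx hy
  have htne : t ≠ 0 := ne_of_gt ht
  have hbne : Real.sqrt t ≠ 0 := ne_of_gt hb
  field_simp
  linear_combination (8 * t ^ 2 * Real.sqrt t) * ha2 -
    (8 * t * Real.sqrt t * (1 + t - t ^ 2)) * hb2
end

section
/- For every real q with 0 < q < 1, setting α := 16q·ψ(q²)⁴/φ(q)⁴ and β := 16q¹⁵·ψ(q³⁰)⁴/φ(q¹⁵)⁴, one has √((1 + √(αβ) + √((1−α)(1−β)))/2) = φ(q²)φ(q³⁰)/(φ(q)φ(q¹⁵)) + 4q⁸·ψ(q⁴)ψ(q⁶⁰)/(φ(q)φ(q¹⁵)), where the square roots denote nonnegative real roots. -/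
/-- Ramanujan theta function `φ(q) = ∑_{n ∈ ℤ} q^(n²)`. -/
noncomputable def phi (q : ℝ) : ℝ := ∑' n : ℤ, q ^ (n.natAbs ^ 2)

/-- Ramanujan theta function `ψ(q) = ∑_{n ≥ 0} q^(n(n+1)/2)`. -/
noncomputable def psi (q : ℝ) : ℝ := ∑' n : ℕ, q ^ (n * (n + 1) / 2)

namespace ThetaAux

lemma abs_zpow' (t : ℝ) (k : ℤ) : |t ^ k| = |t| ^ k := by
  rcases k with n | n
  · simp [abs_pow]
  · simp [zpow_negSucc, abs_inv, abs_pow]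

lemma summable_zpow (t : ℝ) (ht : t ≠ 0) (h1 : |t| < 1) (P : ℤ → ℤ)
    (hP : ∀ n : ℤ, (n.natAbs : ℤ) ≤ P n + 1) :
    Summable fun n : ℤ => t ^ P n := by
  have h0 : 0 < |t| := abs_pos.mpr ht
  rw [← summable_abs_iff]
  have hgeo : Summable fun n : ℤ => |t| ^ (n.natAbs) := by
    apply Summable.of_nat_of_neg
    · simpa using summable_geometric_of_lt_one (abs_nonneg t) h1
    · simpa using summable_geometric_of_lt_one (abs_nonneg t) h1
  have hmaj : Summable fun n : ℤ => |t|⁻¹ * |t| ^ (n.natAbs) := hgeo.mul_left _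
  apply Summable.of_nonneg_of_le (fun n => abs_nonneg _) _ hmaj
  intro n
  rw [abs_zpow']
  have hb : |t| ^ P n ≤ |t| ^ ((n.natAbs : ℤ) - 1) :=
    zpow_le_zpow_right_of_le_one₀ h0 h1.le (by linarith [hP n])
  calc |t| ^ P n ≤ |t| ^ ((n.natAbs : ℤ) - 1) := hb
    _ = |t|⁻¹ * |t| ^ (n.natAbs) := by
        rw [zpow_sub₀ (ne_of_gt h0), zpow_one, zpow_natCast]
        ring

lemma summable_sq (t : ℝ) (ht : t ≠ 0) (h1 : |t| < 1) :
    Summable fun n : ℤ => t ^ (n ^ 2 : ℤ) := by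
  apply summable_zpow t ht h1
  intro n
  have h2 : ((n.natAbs : ℤ)) ^ 2 = n ^ 2 := Int.natAbs_sq n
  have h3 : (0 : ℤ) ≤ (n.natAbs : ℤ) := Int.natCast_nonneg _
  nlinarith [sq_nonneg ((n.natAbs : ℤ) - 1)]

lemma summable_tri (t : ℝ) (ht : t ≠ 0) (h1 : |t| < 1) :
    Summable fun n : ℤ => t ^ (n ^ 2 + n : ℤ) := by
  apply summable_zpow t ht h1
  intro n
  have h2 : ((n.natAbs : ℤ)) ^ 2 = n ^ 2 := Int.natAbs_sq n
  have h3 : -(n.natAbs : ℤ) ≤ n := by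
    rw [← Int.abs_eq_natAbs]; exact neg_abs_le n
  nlinarith [sq_nonneg ((n.natAbs : ℤ) - 1)]

lemma phi_zpow (t : ℝ) (ht : t ≠ 0) : phi t = ∑' n : ℤ, t ^ (n ^ 2 : ℤ) := by
  unfold phi
  refine tsum_congr fun n => ?_
  rw [← zpow_natCast t (n.natAbs ^ 2)]
  congr 1
  rw [Nat.cast_pow, Int.natAbs_sq]

lemma zpow_two_mul (x : ℝ) (hx : x ≠ 0) (k : ℤ) : (x ^ 2) ^ k = x ^ (2 * k) := by
  rw [sq, mul_zpow, ← zpow_add₀ hx, two_mul]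

lemma tsum_tri (t : ℝ) (h0 : 0 < t) (h1 : t < 1) :
    ∑' n : ℤ, t ^ (n ^ 2 + n : ℤ) = 2 * psi (t ^ 2) := by
  have ht : t ≠ 0 := h0.ne'
  have habs : |t| < 1 := by rwa [abs_of_pos h0]
  have hsum := summable_tri t ht habs
  have hterm : ∀ n : ℕ, t ^ ((n : ℤ) ^ 2 + (n : ℤ)) = (t ^ 2) ^ (n * (n + 1) / 2) := by
    intro n
    have hd : n * (n + 1) / 2 * 2 = n ^ 2 + n := by
      rw [Nat.div_mul_cancel (Nat.even_mul_succ_self n).two_dvd]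
      ring
    calc t ^ ((n : ℤ) ^ 2 + (n : ℤ)) = t ^ ((n ^ 2 + n : ℕ) : ℤ) := by
          norm_cast
      _ = t ^ (n ^ 2 + n : ℕ) := zpow_natCast t _
      _ = (t ^ 2) ^ (n * (n + 1) / 2) := by rw [← pow_mul, mul_comm 2, hd]
  have hs1 : Summable fun n : ℕ => t ^ ((n : ℤ) ^ 2 + (n : ℤ)) :=
    hsum.comp_injective (fun a b h => by exact_mod_cast h)
  have hs2 : Summable fun n : ℕ => t ^ ((-((n : ℤ) + 1)) ^ 2 + (-((n : ℤ) + 1))) :=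
    hsum.comp_injective (fun a b h => by omega)
  rw [tsum_of_nat_of_neg_add_one (f := fun n : ℤ => t ^ (n ^ 2 + n : ℤ)) hs1 hs2]
  have hterm2 : ∀ n : ℕ, t ^ ((-((n : ℤ) + 1)) ^ 2 + (-((n : ℤ) + 1)))
      = t ^ ((n : ℤ) ^ 2 + (n : ℤ)) := by
    intro n; congr 1; ring
  have e1 : (∑' n : ℕ, t ^ ((n : ℤ) ^ 2 + (n : ℤ))) = psi (t ^ 2) := by
    unfold psi; exact tsum_congr hterm
  have e2 : (∑' n : ℕ, t ^ ((-((n : ℤ) + 1)) ^ 2 + (-((n : ℤ) + 1)))) = psi (t ^ 2) := by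
    unfold psi
    rw [tsum_congr hterm2]
    exact tsum_congr hterm
  rw [e1, e2]; ring

def Epar : Set (ℤ × ℤ) := {p | (p.1 + p.2) % 2 = 0}

def eE : ℤ × ℤ ≃ ↥Epar where
  toFun p := ⟨(p.1 + p.2, p.1 - p.2), by simp only [Epar, Set.mem_setOf_eq]; omega⟩
  invFun p := ((p.1.1 + p.1.2) / 2, (p.1.1 - p.1.2) / 2)
  left_inv p := by
    obtain ⟨a, b⟩ := p
    simp only
    refine Prod.ext ?_ ?_ <;> simp <;> omega
  right_inv p := by
    obtain ⟨⟨a, b⟩, h⟩ := p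
    have h' : (a + b) % 2 = 0 := h
    apply Subtype.ext
    refine Prod.ext ?_ ?_ <;> simp <;> omega

def eO : ℤ × ℤ ≃ ↥(Eparᶜ) where
  toFun p := ⟨(p.1 + p.2 + 1, p.1 - p.2), by
    simp only [Set.mem_compl_iff, Epar, Set.mem_setOf_eq]; omega⟩
  invFun p := ((p.1.1 + p.1.2 - 1) / 2, (p.1.1 - p.1.2 - 1) / 2)
  left_inv p := by
    obtain ⟨a, b⟩ := p
    simp only
    refine Prod.ext ?_ ?_ <;> simp <;> omega
  right_inv p := by
    obtain ⟨⟨a, b⟩, h⟩ := p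
    have h' : ¬ ((a + b) % 2 = 0) := h
    apply Subtype.ext
    refine Prod.ext ?_ ?_ <;> simp <;> omega

def jflip : ℤ × ℤ ≃ ℤ × ℤ where
  toFun p := (-1 - p.1, p.2)
  invFun p := (-1 - p.1, p.2)
  left_inv p := by obtain ⟨a, b⟩ := p; refine Prod.ext ?_ ?_ <;> simp <;> omega
  right_inv p := by obtain ⟨a, b⟩ := p; refine Prod.ext ?_ ?_ <;> simp <;> omega

def eflip : ↥Epar ≃ ↥(Eparᶜ) :=
  (Equiv.subtypeEquiv jflip (by
    intro p
    simp only [Epar, jflip, Set.mem_compl_iff, Set.mem_setOf_eq, Equiv.coe_fn_mk]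
    omega))

lemma norm_summable_sq (t : ℝ) (ht : t ≠ 0) (h1 : |t| < 1) :
    Summable fun n : ℤ => ‖t ^ (n ^ 2 : ℤ)‖ := by
  simpa only [Real.norm_eq_abs] using (summable_sq t ht h1).abs

lemma norm_summable_tri (t : ℝ) (ht : t ≠ 0) (h1 : |t| < 1) :
    Summable fun n : ℤ => ‖t ^ (n ^ 2 + n : ℤ)‖ := by
  simpa only [Real.norm_eq_abs] using (summable_tri t ht h1).abs

lemma summable_F_sq (x : ℝ) (hx : x ≠ 0) (h1 : |x| < 1) :
    Summable fun p : ℤ × ℤ => x ^ (p.1 ^ 2 + p.2 ^ 2 : ℤ) := by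
  have := summable_mul_of_summable_norm (norm_summable_sq x hx h1) (norm_summable_sq x hx h1)
  exact this.congr fun p => (zpow_add₀ hx _ _).symm

lemma summable_F_tri (x : ℝ) (hx : x ≠ 0) (h1 : |x| < 1) :
    Summable fun p : ℤ × ℤ => x ^ (p.1 ^ 2 + p.1 + p.2 ^ 2 + p.2 : ℤ) := by
  have := summable_mul_of_summable_norm (norm_summable_tri x hx h1) (norm_summable_tri x hx h1)
  refine this.congr fun p => ?_
  rw [← zpow_add₀ hx]
  congr 1
  ring

lemma phi_sq_eq (x : ℝ) (hx : x ≠ 0) (h1 : |x| < 1) :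
    phi x ^ 2 = ∑' p : ℤ × ℤ, x ^ (p.1 ^ 2 + p.2 ^ 2 : ℤ) := by
  rw [phi_zpow x hx, sq,
    tsum_mul_tsum_of_summable_norm (norm_summable_sq x hx h1) (norm_summable_sq x hx h1)]
  exact tsum_congr fun p => (zpow_add₀ hx _ _).symm

lemma psi_sq_eq (x : ℝ) (h0 : 0 < x) (h1 : x < 1) :
    4 * psi (x ^ 2) ^ 2 = ∑' p : ℤ × ℤ, x ^ (p.1 ^ 2 + p.1 + p.2 ^ 2 + p.2 : ℤ) := by
  have hx := h0.ne'
  have habs : |x| < 1 := by rwa [abs_of_pos h0]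
  have h4 : 4 * psi (x ^ 2) ^ 2 = (2 * psi (x ^ 2)) * (2 * psi (x ^ 2)) := by ring
  rw [h4, ← tsum_tri x h0 h1,
    tsum_mul_tsum_of_summable_norm (norm_summable_tri x hx habs) (norm_summable_tri x hx habs)]
  refine tsum_congr fun p => ?_
  rw [← zpow_add₀ hx]
  congr 1
  ring

lemma sq_lt_one {x : ℝ} (h0 : 0 < x) (h1 : x < 1) : x ^ 2 < 1 := by nlinarith

lemma abs_sq_lt_one {x : ℝ} (h0 : 0 < x) (h1 : x < 1) : |x ^ 2| < 1 := by
  rw [abs_of_pos (by positivity)]; exact sq_lt_one h0 h1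

lemma sumE_sq (x : ℝ) (h0 : 0 < x) (h1 : x < 1) :
    ∑' p : ↥Epar, x ^ ((p : ℤ × ℤ).1 ^ 2 + (p : ℤ × ℤ).2 ^ 2 : ℤ) = phi (x ^ 2) ^ 2 := by
  have hx : x ≠ 0 := h0.ne'
  have hx2 : x ^ 2 ≠ 0 := pow_ne_zero _ hx
  calc ∑' p : ↥Epar, x ^ ((p : ℤ × ℤ).1 ^ 2 + (p : ℤ × ℤ).2 ^ 2 : ℤ)
      = ∑' p : ℤ × ℤ, x ^ (((eE p : ℤ × ℤ)).1 ^ 2 + ((eE p : ℤ × ℤ)).2 ^ 2 : ℤ) :=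
        (eE.tsum_eq _).symm
    _ = ∑' p : ℤ × ℤ, (x ^ 2) ^ (p.1 ^ 2 : ℤ) * (x ^ 2) ^ (p.2 ^ 2 : ℤ) := by
        refine tsum_congr fun p => ?_
        simp only [eE, Equiv.coe_fn_mk]
        rw [zpow_two_mul x hx, zpow_two_mul x hx, ← zpow_add₀ hx]
        congr 1
        ring
    _ = (∑' n : ℤ, (x ^ 2) ^ (n ^ 2 : ℤ)) * ∑' n : ℤ, (x ^ 2) ^ (n ^ 2 : ℤ) :=
        (tsum_mul_tsum_of_summable_norm (norm_summable_sq _ hx2 (abs_sq_lt_one h0 h1))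
          (norm_summable_sq _ hx2 (abs_sq_lt_one h0 h1))).symm
    _ = phi (x ^ 2) ^ 2 := by rw [← phi_zpow _ hx2]; ring

lemma sumO_sq (x : ℝ) (h0 : 0 < x) (h1 : x < 1) :
    ∑' p : ↥(Eparᶜ), x ^ ((p : ℤ × ℤ).1 ^ 2 + (p : ℤ × ℤ).2 ^ 2 : ℤ)
      = 4 * x * psi (x ^ 4) ^ 2 := by
  have hx : x ≠ 0 := h0.ne'
  have hx2 : x ^ 2 ≠ 0 := pow_ne_zero _ hx
  have h20 : 0 < x ^ 2 := by positivity
  have h21 : x ^ 2 < 1 := sq_lt_one h0 h1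
  calc ∑' p : ↥(Eparᶜ), x ^ ((p : ℤ × ℤ).1 ^ 2 + (p : ℤ × ℤ).2 ^ 2 : ℤ)
      = ∑' p : ℤ × ℤ, x ^ (((eO p : ℤ × ℤ)).1 ^ 2 + ((eO p : ℤ × ℤ)).2 ^ 2 : ℤ) :=
        (eO.tsum_eq _).symm
    _ = ∑' p : ℤ × ℤ, x * ((x ^ 2) ^ (p.1 ^ 2 + p.1 : ℤ) * (x ^ 2) ^ (p.2 ^ 2 + p.2 : ℤ)) := by
        refine tsum_congr fun p => ?_
        simp only [eO, Equiv.coe_fn_mk]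
        rw [zpow_two_mul x hx, zpow_two_mul x hx, ← zpow_add₀ hx, ← zpow_one_add₀ hx]
        congr 1
        ring
    _ = x * ∑' p : ℤ × ℤ, (x ^ 2) ^ (p.1 ^ 2 + p.1 : ℤ) * (x ^ 2) ^ (p.2 ^ 2 + p.2 : ℤ) :=
        tsum_mul_left
    _ = x * ((∑' n : ℤ, (x ^ 2) ^ (n ^ 2 + n : ℤ)) * ∑' n : ℤ, (x ^ 2) ^ (n ^ 2 + n : ℤ)) := by
        rw [tsum_mul_tsum_of_summable_norm (norm_summable_tri _ hx2 (abs_sq_lt_one h0 h1))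
          (norm_summable_tri _ hx2 (abs_sq_lt_one h0 h1))]
    _ = 4 * x * psi (x ^ 4) ^ 2 := by
        rw [tsum_tri _ h20 h21, show ((x ^ 2) ^ 2 : ℝ) = x ^ 4 by ring]
        ring

lemma sumE_tri (x : ℝ) (h0 : 0 < x) (h1 : x < 1) :
    ∑' p : ↥Epar, x ^ ((p : ℤ × ℤ).1 ^ 2 + (p : ℤ × ℤ).1 + (p : ℤ × ℤ).2 ^ 2 + (p : ℤ × ℤ).2 : ℤ)
      = 2 * phi (x ^ 2) * psi (x ^ 4) := by
  have hx : x ≠ 0 := h0.ne'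
  have hx2 : x ^ 2 ≠ 0 := pow_ne_zero _ hx
  have h20 : 0 < x ^ 2 := by positivity
  have h21 : x ^ 2 < 1 := sq_lt_one h0 h1
  calc ∑' p : ↥Epar, x ^ ((p : ℤ × ℤ).1 ^ 2 + (p : ℤ × ℤ).1 + (p : ℤ × ℤ).2 ^ 2
        + (p : ℤ × ℤ).2 : ℤ)
      = ∑' p : ℤ × ℤ, x ^ (((eE p : ℤ × ℤ)).1 ^ 2 + ((eE p : ℤ × ℤ)).1
          + ((eE p : ℤ × ℤ)).2 ^ 2 + ((eE p : ℤ × ℤ)).2 : ℤ) := (eE.tsum_eq _).symm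
    _ = ∑' p : ℤ × ℤ, (x ^ 2) ^ (p.1 ^ 2 + p.1 : ℤ) * (x ^ 2) ^ (p.2 ^ 2 : ℤ) := by
        refine tsum_congr fun p => ?_
        simp only [eE, Equiv.coe_fn_mk]
        rw [zpow_two_mul x hx, zpow_two_mul x hx, ← zpow_add₀ hx]
        congr 1
        ring
    _ = (∑' n : ℤ, (x ^ 2) ^ (n ^ 2 + n : ℤ)) * ∑' n : ℤ, (x ^ 2) ^ (n ^ 2 : ℤ) :=
        (tsum_mul_tsum_of_summable_norm (norm_summable_tri _ hx2 (abs_sq_lt_one h0 h1))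
          (norm_summable_sq _ hx2 (abs_sq_lt_one h0 h1))).symm
    _ = 2 * phi (x ^ 2) * psi (x ^ 4) := by
        rw [tsum_tri _ h20 h21, ← phi_zpow _ hx2, show ((x ^ 2) ^ 2 : ℝ) = x ^ 4 by ring]
        ring

lemma sumO_tri (x : ℝ) :
    ∑' p : ↥(Eparᶜ),
        x ^ ((p : ℤ × ℤ).1 ^ 2 + (p : ℤ × ℤ).1 + (p : ℤ × ℤ).2 ^ 2 + (p : ℤ × ℤ).2 : ℤ)
      = ∑' p : ↥Epar,
          x ^ ((p : ℤ × ℤ).1 ^ 2 + (p : ℤ × ℤ).1 + (p : ℤ × ℤ).2 ^ 2 + (p : ℤ × ℤ).2 : ℤ) := by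
  rw [← eflip.tsum_eq]
  refine tsum_congr fun p => ?_
  obtain ⟨⟨a, b⟩, h⟩ := p
  simp only [eflip, jflip, Equiv.subtypeEquiv, Equiv.coe_fn_mk]
  congr 1
  ring

lemma sq_parity (a b : ℤ) : (a ^ 2 + b ^ 2) % 2 = (a + b) % 2 := by
  obtain ⟨r, hr⟩ := Int.even_mul_succ_self (a - 1)
  obtain ⟨s, hs⟩ := Int.even_mul_succ_self (b - 1)
  have ha : a ^ 2 = (r + r) + a := by rw [← hr]; ring
  have hb : b ^ 2 = (s + s) + b := by rw [← hs]; ring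
  omega

lemma P0 (x : ℝ) (h0 : 0 < x) (h1 : x < 1) :
    phi x ^ 2 = phi (x ^ 2) ^ 2 + 4 * x * psi (x ^ 4) ^ 2 := by
  have hx : x ≠ 0 := h0.ne'
  have habs : |x| < 1 := by rwa [abs_of_pos h0]
  have hF := summable_F_sq x hx habs
  rw [phi_sq_eq x hx habs,
    ← Summable.tsum_add_tsum_compl (s := Epar) (hF.subtype _) (hF.subtype _)]
  rw [sumE_sq x h0 h1, sumO_sq x h0 h1]

lemma Pneg (x : ℝ) (h0 : 0 < x) (h1 : x < 1) :
    phi (-x) ^ 2 = phi (x ^ 2) ^ 2 - 4 * x * psi (x ^ 4) ^ 2 := by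
  have hx : -x ≠ 0 := neg_ne_zero.mpr h0.ne'
  have habs : |(-x)| < 1 := by rwa [abs_neg, abs_of_pos h0]
  have hF := summable_F_sq (-x) hx habs
  rw [phi_sq_eq (-x) hx habs,
    ← Summable.tsum_add_tsum_compl (s := Epar) (hF.subtype _) (hF.subtype _)]
  have hEterm : ∀ p : ↥Epar,
      (-x) ^ ((p : ℤ × ℤ).1 ^ 2 + (p : ℤ × ℤ).2 ^ 2 : ℤ)
        = x ^ ((p : ℤ × ℤ).1 ^ 2 + (p : ℤ × ℤ).2 ^ 2 : ℤ) := by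
    rintro ⟨⟨a, b⟩, h⟩
    have h' : (a + b) % 2 = 0 := h
    have he : Even (a ^ 2 + b ^ 2) := Int.even_iff.mpr (by rw [sq_parity]; omega)
    exact he.neg_zpow x
  have hOterm : ∀ p : ↥(Eparᶜ),
      (-x) ^ ((p : ℤ × ℤ).1 ^ 2 + (p : ℤ × ℤ).2 ^ 2 : ℤ)
        = -(x ^ ((p : ℤ × ℤ).1 ^ 2 + (p : ℤ × ℤ).2 ^ 2 : ℤ)) := by
    rintro ⟨⟨a, b⟩, h⟩
    have h' : ¬ ((a + b) % 2 = 0) := h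
    have he : Odd (a ^ 2 + b ^ 2) := Int.odd_iff.mpr (by rw [sq_parity]; omega)
    exact he.neg_zpow x
  rw [tsum_congr hEterm, tsum_congr hOterm, tsum_neg, sumE_sq x h0 h1, sumO_sq x h0 h1]
  ring

lemma lemB (x : ℝ) (h0 : 0 < x) (h1 : x < 1) :
    psi (x ^ 2) ^ 2 = phi (x ^ 2) * psi (x ^ 4) := by
  have hx : x ≠ 0 := h0.ne'
  have habs : |x| < 1 := by rwa [abs_of_pos h0]
  have hF := summable_F_tri x hx habs
  have key := psi_sq_eq x h0 h1
  rw [← Summable.tsum_add_tsum_compl (s := Epar) (hF.subtype _) (hF.subtype _)] at key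
  rw [sumO_tri x, sumE_tri x h0 h1] at key
  nlinarith [key]

lemma lemJ (x : ℝ) (h0 : 0 < x) (h1 : x < 1) :
    phi x ^ 4 = phi (-x) ^ 4 + 16 * x * psi (x ^ 2) ^ 4 := by
  have h1' := P0 x h0 h1
  have h2' := Pneg x h0 h1
  have h3' := lemB x h0 h1
  have e1 : phi x ^ 4 = (phi (x ^ 2) ^ 2 + 4 * x * psi (x ^ 4) ^ 2) ^ 2 := by
    rw [show phi x ^ 4 = (phi x ^ 2) ^ 2 by ring, h1']
  have e2 : phi (-x) ^ 4 = (phi (x ^ 2) ^ 2 - 4 * x * psi (x ^ 4) ^ 2) ^ 2 := by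
    rw [show phi (-x) ^ 4 = (phi (-x) ^ 2) ^ 2 by ring, h2']
  have e3 : psi (x ^ 2) ^ 4 = (phi (x ^ 2) * psi (x ^ 4)) ^ 2 := by
    rw [show psi (x ^ 2) ^ 4 = (psi (x ^ 2) ^ 2) ^ 2 by ring, h3']
  rw [e1, e2, e3]
  ring

lemma phi_pos (t : ℝ) (h0 : 0 < t) (h1 : t < 1) : 0 < phi t := by
  have habs : |t| < 1 := by rwa [abs_of_pos h0]
  have hsum : Summable fun n : ℤ => t ^ (n.natAbs ^ 2) := by
    refine (summable_sq t h0.ne' habs).congr fun n => ?_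
    rw [← zpow_natCast t (n.natAbs ^ 2)]
    congr 1
    rw [Nat.cast_pow, Int.natAbs_sq]
  refine Summable.tsum_pos hsum (fun n => by positivity) 0 (by norm_num)

lemma psi_nonneg (t : ℝ) (h0 : 0 ≤ t) : 0 ≤ psi t :=
  tsum_nonneg fun n => by positivity

end ThetaAux

open ThetaAux

/-- Theta-function translation of `√((1+√(αβ)+√((1−α)(1−β)))/2)` for degree 15
(equation (38) of the paper). -/
theorem sqrt_identity_theta_form (q : ℝ) (hq0 : 0 < q) (hq1 : q < 1)
    (α β : ℝ)
    (hα : α = 16 * q * psi (q ^ 2) ^ 4 / phi q ^ 4)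
    (hβ : β = 16 * q ^ 15 * psi (q ^ 30) ^ 4 / phi (q ^ 15) ^ 4) :
    Real.sqrt ((1 + Real.sqrt (α * β) + Real.sqrt ((1 - α) * (1 - β))) / 2) =
      phi (q ^ 2) * phi (q ^ 30) / (phi q * phi (q ^ 15)) +
        4 * q ^ 8 * (psi (q ^ 4) * psi (q ^ 60)) / (phi q * phi (q ^ 15)) := by
  have hqk : ∀ k : ℕ, k ≠ 0 → 0 < q ^ k ∧ q ^ k < 1 := fun k hk =>
    ⟨by positivity, pow_lt_one₀ hq0.le hq1 hk⟩
  obtain ⟨h15p, h15l⟩ := hqk 15 (by norm_num)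
  have hφq : 0 < phi q := phi_pos q hq0 hq1
  have hφ15 : 0 < phi (q ^ 15) := phi_pos _ h15p h15l
  have hφ2 : 0 < phi (q ^ 2) := phi_pos _ (hqk 2 (by norm_num)).1 (hqk 2 (by norm_num)).2
  have hφ30 : 0 < phi (q ^ 30) := phi_pos _ (hqk 30 (by norm_num)).1 (hqk 30 (by norm_num)).2
  have hψ2 : 0 ≤ psi (q ^ 2) := psi_nonneg _ (by positivity)
  have hψ30 : 0 ≤ psi (q ^ 30) := psi_nonneg _ (by positivity)
  have hψ4 : 0 ≤ psi (q ^ 4) := psi_nonneg _ (by positivity)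
  have hψ60 : 0 ≤ psi (q ^ 60) := psi_nonneg _ (by positivity)
  have e30 : ((q : ℝ) ^ 15) ^ 2 = q ^ 30 := by ring
  have e60 : ((q : ℝ) ^ 15) ^ 4 = q ^ 60 := by ring
  -- main identities
  have hP0q : phi q ^ 2 = phi (q ^ 2) ^ 2 + 4 * q * psi (q ^ 4) ^ 2 := P0 q hq0 hq1
  have hPnq : phi (-q) ^ 2 = phi (q ^ 2) ^ 2 - 4 * q * psi (q ^ 4) ^ 2 := Pneg q hq0 hq1
  have hP0f : phi (q ^ 15) ^ 2 = phi (q ^ 30) ^ 2 + 4 * q ^ 15 * psi (q ^ 60) ^ 2 := by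
    have := P0 (q ^ 15) h15p h15l; rwa [e30, e60] at this
  have hPnf : phi (-q ^ 15) ^ 2 = phi (q ^ 30) ^ 2 - 4 * q ^ 15 * psi (q ^ 60) ^ 2 := by
    have := Pneg (q ^ 15) h15p h15l; rwa [e30, e60] at this
  have hBq : psi (q ^ 2) ^ 2 = phi (q ^ 2) * psi (q ^ 4) := lemB q hq0 hq1
  have hB15 : psi (q ^ 30) ^ 2 = phi (q ^ 30) * psi (q ^ 60) := by
    have := lemB (q ^ 15) h15p h15l; rwa [e30, e60] at this
  have hJq : phi q ^ 4 = phi (-q) ^ 4 + 16 * q * psi (q ^ 2) ^ 4 := lemJ q hq0 hq1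
  have hJ15 : phi (q ^ 15) ^ 4 = phi (-q ^ 15) ^ 4 + 16 * q ^ 15 * psi (q ^ 30) ^ 4 := by
    have := lemJ (q ^ 15) h15p h15l; rwa [e30] at this
  -- sqrt of α β
  have hc : Real.sqrt (α * β)
      = 16 * q ^ 8 * psi (q ^ 2) ^ 2 * psi (q ^ 30) ^ 2 / (phi q ^ 2 * phi (q ^ 15) ^ 2) := by
    rw [hα, hβ, show 16 * q * psi (q ^ 2) ^ 4 / phi q ^ 4
          * (16 * q ^ 15 * psi (q ^ 30) ^ 4 / phi (q ^ 15) ^ 4)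
        = (16 * q ^ 8 * psi (q ^ 2) ^ 2 * psi (q ^ 30) ^ 2
            / (phi q ^ 2 * phi (q ^ 15) ^ 2)) ^ 2 by field_simp]
    exact Real.sqrt_sq (by positivity)
  -- sqrt of (1-α)(1-β)
  have h1a : 1 - α = (phi (-q) ^ 2 / phi q ^ 2) ^ 2 := by
    rw [hα]
    field_simp
    linear_combination hJq
  have h1b : 1 - β = (phi (-q ^ 15) ^ 2 / phi (q ^ 15) ^ 2) ^ 2 := by
    rw [hβ]
    field_simp
    linear_combination hJ15
  have hd : Real.sqrt ((1 - α) * (1 - β))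
      = phi (-q) ^ 2 * phi (-q ^ 15) ^ 2 / (phi q ^ 2 * phi (q ^ 15) ^ 2) := by
    rw [h1a, h1b, show (phi (-q) ^ 2 / phi q ^ 2) ^ 2 * (phi (-q ^ 15) ^ 2 / phi (q ^ 15) ^ 2) ^ 2
        = (phi (-q) ^ 2 * phi (-q ^ 15) ^ 2 / (phi q ^ 2 * phi (q ^ 15) ^ 2)) ^ 2 by
          field_simp]
    exact Real.sqrt_sq (by positivity)
  -- numerator identity
  have hN0 : 0 < phi (q ^ 2) * phi (q ^ 30) + 4 * q ^ 8 * (psi (q ^ 4) * psi (q ^ 60)) := by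
    have := mul_pos hφ2 hφ30
    positivity
  have key : phi q ^ 2 * phi (q ^ 15) ^ 2 + 16 * q ^ 8 * psi (q ^ 2) ^ 2 * psi (q ^ 30) ^ 2
      + phi (-q) ^ 2 * phi (-q ^ 15) ^ 2
      = 2 * (phi (q ^ 2) * phi (q ^ 30) + 4 * q ^ 8 * (psi (q ^ 4) * psi (q ^ 60))) ^ 2 := by
    rw [hP0q, hP0f, hPnq, hPnf, hBq, hB15]
    ring
  have hX : (1 + 16 * q ^ 8 * psi (q ^ 2) ^ 2 * psi (q ^ 30) ^ 2 / (phi q ^ 2 * phi (q ^ 15) ^ 2)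
        + phi (-q) ^ 2 * phi (-q ^ 15) ^ 2 / (phi q ^ 2 * phi (q ^ 15) ^ 2)) / 2
      = ((phi (q ^ 2) * phi (q ^ 30) + 4 * q ^ 8 * (psi (q ^ 4) * psi (q ^ 60)))
          / (phi q * phi (q ^ 15))) ^ 2 := by
    rw [div_pow, mul_pow]
    rw [eq_div_iff (by positivity)]
    field_simp
    linear_combination key
  rw [hc, hd, hX, Real.sqrt_sq (by positivity)]
  rw [add_div]
end
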